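/- Let x, y ∈ Matrix (Fin n) (Fin d) k. If there exists F ∈ ^H k[M_{n,d}] with F(x) ≠ F(y) (evaluation at the matrix entries), then there exists f ∈ GL_d * j(^H k[M_{n,n}]) with f(x) ≠ f(y). (Theorem 7, case Z = {0}.) -/

import Mathlib

open MvPolynomial

/-- The action of `g ∈ GL_d(k)` on `k[M_{n,d}]` by `(g * F)(x) = F(x·g)`,
i.e. substituting `X(i,q) ↦ Σ_s X(i,s)·g(s,q)`. -/
noncomputable def colAct {k : Type*} [Field k] {n d : ℕ} (g : GL (Fin d) k) :
    MvPolynomial (Fin n × Fin d) k →ₐ[k] MvPolynomial (Fin n × Fin d) k :=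
  aeval fun p => ∑ s : Fin d, X (p.1, s) * C ((g : Matrix (Fin d) (Fin d) k) s p.2)

/-- The action of `h ∈ GL_n(k)` on `k[M_{n,d}]` by `(h · F)(x) = F(h⁻¹·x)`,
i.e. substituting `X(i,q) ↦ Σ_s (h⁻¹)(i,s)·X(s,q)`. -/
noncomputable def rowAct {k : Type*} [Field k] {n d : ℕ} (h : GL (Fin n) k) :
    MvPolynomial (Fin n × Fin d) k →ₐ[k] MvPolynomial (Fin n × Fin d) k :=
  aeval fun p =>
    ∑ s : Fin n, C (((h⁻¹ : GL (Fin n) k) : Matrix (Fin n) (Fin n) k) p.1 s) * X (s, p.2)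

/-- The embedding `j : k[M_{n,n}] → k[M_{n,d}]`, `X(i,q) ↦ X(i,q)`. -/
noncomputable def jmap {k : Type*} [Field k] {n d : ℕ} (hnd : n ≤ d) :
    MvPolynomial (Fin n × Fin n) k →ₐ[k] MvPolynomial (Fin n × Fin d) k :=
  aeval fun p => X (p.1, Fin.castLE hnd p.2)

/-- `^H k[M_{n,d}]`, the subalgebra of `H`-invariant polynomials. -/
def HinvAlg {k : Type*} [Field k] {n d : ℕ} (H : Subgroup (GL (Fin n) k)) :
    Subalgebra k (MvPolynomial (Fin n × Fin d) k) where
  carrier := {F | ∀ h ∈ H, rowAct h F = F}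
  mul_mem' := fun ha hb h hh => by rw [map_mul, ha h hh, hb h hh]
  add_mem' := fun ha hb h hh => by rw [map_add, ha h hh, hb h hh]
  algebraMap_mem' := fun r h hh => by simp

/-- `GL_d * j(^H k[M_{n,n}])`: the `k`-subalgebra of `k[M_{n,d}]` generated by all
polarizations `g * (j f)` of `H`-invariants of `n` vectors. -/
noncomputable def polarized {k : Type*} [Field k] {n d : ℕ} (hnd : n ≤ d)
    (H : Subgroup (GL (Fin n) k)) : Subalgebra k (MvPolynomial (Fin n × Fin d) k) :=
  Algebra.adjoin k
    {F | ∃ g : GL (Fin d) k, ∃ f ∈ HinvAlg (d := n) H, F = colAct g (jmap hnd f)}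

namespace Stmt6Aux
open Matrix

variable {k : Type*} [Field k] {n d : ℕ}

lemma eval_aeval' {σ τ : Type*} (φ : σ → MvPolynomial τ k) (v : τ → k)
    (F : MvPolynomial σ k) :
    eval v (aeval φ F) = eval (fun s => eval v (φ s)) F := by
  induction F using MvPolynomial.induction_on with
  | C a => simp
  | add p q hp hq => simp only [map_add, hp, hq]
  | mul_X p i h => rw [_root_.map_mul, aeval_X, eval_mul, h, eval_mul, eval_X]

/-- substitution `z ↦ z·b` on polynomial level, from `k[M_{n,d}]` to `k[M_{n,n}]`. -/
noncomputable def substR (b : Matrix (Fin n) (Fin d) k) :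
    MvPolynomial (Fin n × Fin d) k →ₐ[k] MvPolynomial (Fin n × Fin n) k :=
  aeval fun p => ∑ u : Fin n, X (p.1, u) * C (b u p.2)

lemma eval_substR (b : Matrix (Fin n) (Fin d) k) (z : Matrix (Fin n) (Fin n) k)
    (F : MvPolynomial (Fin n × Fin d) k) :
    eval (fun p => z p.1 p.2) (substR b F)
      = eval (fun p : Fin n × Fin d => (z * b) p.1 p.2) F := by
  rw [substR, eval_aeval']
  have hv : (fun s : Fin n × Fin d =>
      eval (fun p : Fin n × Fin n => z p.1 p.2) (∑ u : Fin n, X (s.1, u) * C (b u s.2)))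
      = fun s : Fin n × Fin d => (z * b) s.1 s.2 := by
    funext s
    simp [Matrix.mul_apply]
  rw [hv]

lemma eval_colAct (M : Matrix (Fin n) (Fin d) k) (g : GL (Fin d) k)
    (P : MvPolynomial (Fin n × Fin d) k) :
    eval (fun p => M p.1 p.2) (colAct g P)
      = eval (fun p : Fin n × Fin d => (M * (g : Matrix (Fin d) (Fin d) k)) p.1 p.2) P := by
  rw [colAct, eval_aeval']
  have hv : (fun s : Fin n × Fin d =>
      eval (fun p : Fin n × Fin d => M p.1 p.2)
        (∑ t : Fin d, X (s.1, t) * C ((g : Matrix (Fin d) (Fin d) k) t s.2)))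
      = fun s : Fin n × Fin d => (M * (g : Matrix (Fin d) (Fin d) k)) s.1 s.2 := by
    funext s
    simp [Matrix.mul_apply]
  rw [hv]

/-- the `d × n` inclusion matrix -/
noncomputable def inc (hnd : n ≤ d) : Matrix (Fin d) (Fin n) k :=
  Matrix.of fun i j => if i = Fin.castLE hnd j then 1 else 0

/-- the `d × d` idempotent projecting to the first `n` coordinates -/
noncomputable def Emat (hnd : n ≤ d) : Matrix (Fin d) (Fin d) k :=
  (inc (k := k) hnd : Matrix (Fin d) (Fin n) k) * (inc (k := k) hnd)ᵀ

lemma mul_inc_apply (hnd : n ≤ d) {a : ℕ} (M : Matrix (Fin a) (Fin d) k)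
    (i : Fin a) (u : Fin n) :
    (M * inc (k := k) hnd) i u = M i (Fin.castLE hnd u) := by
  simp [inc, Matrix.mul_apply]

lemma mul_E_apply (hnd : n ≤ d) {a : ℕ} (M : Matrix (Fin a) (Fin d) k)
    (i : Fin a) (j : Fin d) :
    (M * Emat (k := k) hnd) i j = if (j : ℕ) < n then M i j else 0 := by
  rw [Emat, ← Matrix.mul_assoc]
  rw [Matrix.mul_apply]
  by_cases hj : (j : ℕ) < n
  · rw [if_pos hj]
    rw [Finset.sum_eq_single (⟨(j : ℕ), hj⟩ : Fin n)]
    · rw [mul_inc_apply]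
      simp [inc, Matrix.transpose_apply, Fin.ext_iff]
    · intro u _ hu
      rw [mul_inc_apply]
      simp only [inc, Matrix.transpose_apply, Matrix.of_apply]
      rw [if_neg, mul_zero]
      intro h
      exact hu (by ext; simpa [Fin.ext_iff] using h.symm)
    · intro h; exact absurd (Finset.mem_univ _) h
  · rw [if_neg hj]
    apply Finset.sum_eq_zero
    intro u _
    rw [mul_inc_apply]
    simp only [inc, Matrix.transpose_apply, Matrix.of_apply]
    rw [if_neg, mul_zero]
    intro h
    rw [h] at hj
    exact hj (by simpa using u.2)

lemma incT_mul_inc (hnd : n ≤ d) :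
    (inc (k := k) hnd)ᵀ * inc (k := k) hnd = (1 : Matrix (Fin n) (Fin n) k) := by
  ext u u'
  rw [Matrix.mul_apply]
  by_cases h : u = u'
  · subst h
    rw [Finset.sum_eq_single (Fin.castLE hnd u)]
    · simp [inc, Matrix.one_apply]
    · intro b _ hb
      simp only [inc, Matrix.transpose_apply, Matrix.of_apply]
      rw [if_neg hb, zero_mul]
    · intro h; exact absurd (Finset.mem_univ _) h
  · rw [Matrix.one_apply_ne h]
    apply Finset.sum_eq_zero
    intro i _
    simp only [inc, Matrix.transpose_apply, Matrix.of_apply]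
    by_cases h1 : i = Fin.castLE hnd u
    · rw [if_pos h1, if_neg, mul_zero]
      intro h2
      exact h (Fin.castLE_injective hnd (h1.symm.trans h2))
    · rw [if_neg h1, zero_mul]

lemma EE (hnd : n ≤ d) : Emat (k := k) hnd * Emat (k := k) hnd = Emat (k := k) hnd := by
  rw [Emat, Matrix.mul_assoc, ← Matrix.mul_assoc (inc (k := k) hnd)ᵀ, incT_mul_inc]
  simp

lemma mul_E_eq_mul_inc_incT (hnd : n ≤ d) {a : ℕ} (M : Matrix (Fin a) (Fin d) k) :
    M * Emat (k := k) hnd = (M * inc (k := k) hnd) * (inc (k := k) hnd)ᵀ := by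
  rw [Emat, Matrix.mul_assoc]

end Stmt6Aux

namespace Stmt6Aux
open Matrix

variable {k : Type*} [Field k] {n d : ℕ}

lemma substR_rowAct (b : Matrix (Fin n) (Fin d) k) (h : GL (Fin n) k) :
    (rowAct (d := n) h).comp (substR b) = (substR b).comp (rowAct (d := d) h) := by
  apply MvPolynomial.algHom_ext
  rintro ⟨i, q⟩
  simp only [AlgHom.comp_apply, rowAct, substR, aeval_X, map_sum, _root_.map_mul,
    aeval_C, Finset.sum_mul, Finset.mul_sum, algebraMap_eq]
  rw [Finset.sum_comm]
  apply Finset.sum_congr rfl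
  intro u _
  apply Finset.sum_congr rfl
  intro s _
  ring

lemma substR_mem (H : Subgroup (GL (Fin n) k)) (b : Matrix (Fin n) (Fin d) k)
    {F : MvPolynomial (Fin n × Fin d) k} (hF : F ∈ HinvAlg H) :
    substR b F ∈ HinvAlg (d := n) H := by
  intro h hh
  have := congrFun (congrArg (fun (φ : _ →ₐ[k] _) => φ.toFun) (substR_rowAct b h)) F
  simp only [AlgHom.toFun_eq_coe, AlgHom.comp_apply] at this
  rw [this, hF h hh]

lemma gen_eval (hnd : n ≤ d) (H : Subgroup (GL (Fin n) k))
    (x y : Matrix (Fin n) (Fin d) k)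
    {F : MvPolynomial (Fin n × Fin d) k} (hF : F ∈ HinvAlg H)
    (hyp : ∀ f ∈ polarized hnd H,
      eval (fun p => x p.1 p.2) f = eval (fun p => y p.1 p.2) f)
    (g : GL (Fin d) k) (B : Matrix (Fin d) (Fin d) k) :
    eval (fun p => (x * ((g : Matrix (Fin d) (Fin d) k) * Emat (k := k) hnd * B)) p.1 p.2) F
      = eval (fun p => (y * ((g : Matrix (Fin d) (Fin d) k) * Emat (k := k) hnd * B)) p.1 p.2) F := by
  set b : Matrix (Fin n) (Fin d) k := (inc (k := k) (n := n) (d := d) hnd)ᵀ * B with hb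
  have hmem : substR b F ∈ HinvAlg (d := n) H := substR_mem H b hF
  have hgen : colAct g (jmap hnd (substR b F)) ∈ polarized hnd H :=
    Algebra.subset_adjoin ⟨g, substR b F, hmem, rfl⟩
  have key := hyp _ hgen
  have expand : ∀ z : Matrix (Fin n) (Fin d) k,
      eval (fun p => z p.1 p.2) (colAct g (jmap hnd (substR b F)))
        = eval (fun p => (z * ((g : Matrix (Fin d) (Fin d) k) * Emat (k := k) hnd * B)) p.1 p.2) F := by
    intro z
    rw [eval_colAct]
    rw [jmap, eval_aeval']
    have hv : (fun s : Fin n × Fin n =>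
        eval (fun p : Fin n × Fin d => (z * (g : Matrix (Fin d) (Fin d) k)) p.1 p.2)
          (X (s.1, Fin.castLE hnd s.2)))
        = fun s : Fin n × Fin n =>
            ((z * (g : Matrix (Fin d) (Fin d) k)) * inc (k := k) hnd) s.1 s.2 := by
      funext s
      rw [eval_X, mul_inc_apply]
    rw [hv, eval_substR]
    have harg : z * (g : Matrix (Fin d) (Fin d) k) * inc (k := k) hnd * b
        = z * ((g : Matrix (Fin d) (Fin d) k) * Emat (k := k) hnd * B) := by
      rw [hb, ← Matrix.mul_assoc, mul_E_eq_mul_inc_incT]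
      simp only [Matrix.mul_assoc]
    rw [harg]
  rw [← expand x, ← expand y, key]

end Stmt6Aux

namespace Stmt6Aux
open Matrix Module Submodule

variable {k : Type*} [Field k] {V : Type*} [AddCommGroup V] [Module k V]

lemma exists_notMem_pair {W₁ W₂ : Submodule k V} (h₁ : W₁ ≠ ⊤) (h₂ : W₂ ≠ ⊤) :
    ∃ v : V, v ∉ W₁ ∧ v ∉ W₂ := by
  obtain ⟨a, ha⟩ : ∃ a, a ∉ W₁ := by
    by_contra hc
    push_neg at hc
    exact h₁ (Submodule.eq_top_iff'.2 hc)
  obtain ⟨b, hb⟩ : ∃ b, b ∉ W₂ := by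
    by_contra hc
    push_neg at hc
    exact h₂ (Submodule.eq_top_iff'.2 hc)
  by_cases ha2 : a ∉ W₂
  · exact ⟨a, ha, ha2⟩
  by_cases hb1 : b ∉ W₁
  · exact ⟨b, hb1, hb⟩
  push_neg at ha2 hb1
  refine ⟨a + b, fun hc => ha ?_, fun hc => hb ?_⟩
  · have := W₁.sub_mem hc hb1
    simpa using this
  · have := W₂.sub_mem hc ha2
    simpa using this

lemma common_compl [FiniteDimensional k V] :
    ∀ (c : ℕ) (W₁ W₂ : Submodule k V), finrank k W₁ = finrank k W₂ →
      finrank k V = finrank k W₁ + c → ∃ U, IsCompl U W₁ ∧ IsCompl U W₂ := by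
  intro c
  induction c with
  | zero =>
    intro W₁ W₂ heq hdim
    have h₁ : W₁ = ⊤ := Submodule.eq_top_of_finrank_eq (by omega)
    have h₂ : W₂ = ⊤ := Submodule.eq_top_of_finrank_eq (by omega)
    exact ⟨⊥, by rw [h₁]; exact isCompl_bot_top, by rw [h₂]; exact isCompl_bot_top⟩
  | succ c ih =>
    intro W₁ W₂ heq hdim
    have hfr1 : finrank k W₁ < finrank k V := by omega
    have h₁ : W₁ ≠ ⊤ := by
      intro h
      rw [h, finrank_top] at hfr1
      omega
    have h₂ : W₂ ≠ ⊤ := by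
      intro h
      rw [h, finrank_top] at heq
      omega
    obtain ⟨v, hv₁, hv₂⟩ := exists_notMem_pair h₁ h₂
    have hv0 : v ≠ 0 := fun h => hv₁ (h ▸ W₁.zero_mem)
    have step : ∀ W : Submodule k V, v ∉ W →
        finrank k (W ⊔ (k ∙ v) : Submodule k V) = finrank k W + 1 := by
      intro W hvW
      have hdisj : W ⊓ (k ∙ v) = ⊥ := by
        rw [eq_bot_iff]
        rintro z ⟨hz1, hz2⟩
        obtain ⟨c, rfl⟩ := Submodule.mem_span_singleton.1 hz2
        rcases eq_or_ne c 0 with hc | hc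
        · simp [hc]
        · have hmem := W.smul_mem c⁻¹ hz1
          rw [smul_smul, inv_mul_cancel₀ hc, one_smul] at hmem
          exact absurd hmem hvW
      have := Submodule.finrank_sup_add_finrank_inf_eq W (k ∙ v)
      rw [hdisj, finrank_bot, finrank_span_singleton hv0] at this
      omega
    obtain ⟨U', hc₁, hc₂⟩ := ih (W₁ ⊔ (k ∙ v)) (W₂ ⊔ (k ∙ v))
      (by rw [step W₁ hv₁, step W₂ hv₂, heq]) (by rw [step W₁ hv₁]; omega)
    have final : ∀ (W : Submodule k V), v ∉ W → IsCompl U' (W ⊔ (k ∙ v)) →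
        IsCompl (U' ⊔ (k ∙ v)) W := by
      intro W hvW hcompl
      constructor
      · rw [disjoint_iff, eq_bot_iff]
        rintro z ⟨hz1, hz2⟩
        obtain ⟨u, hu, s, hs, rfl⟩ := Submodule.mem_sup.1 hz1
        obtain ⟨c, rfl⟩ := Submodule.mem_span_singleton.1 hs
        have hu' : u ∈ U' ⊓ (W ⊔ (k ∙ v)) := by
          constructor
          · exact hu
          · have : u = (u + c • v) - c • v := by abel
            rw [this]
            exact Submodule.sub_mem _ (Submodule.mem_sup_left hz2)
              (Submodule.mem_sup_right (Submodule.smul_mem _ _ (Submodule.mem_span_singleton_self v)))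
        have hd : U' ⊓ (W ⊔ (k ∙ v)) = ⊥ := hcompl.disjoint.eq_bot
        rw [hd] at hu'
        have hu0 : u = 0 := (Submodule.mem_bot k).1 hu'
        rw [hu0, zero_add] at hz2 ⊢
        rcases eq_or_ne c 0 with hc | hc
        · simp [hc]
        · have hmem := W.smul_mem c⁻¹ hz2
          rw [smul_smul, inv_mul_cancel₀ hc, one_smul] at hmem
          exact absurd hmem hvW
      · rw [codisjoint_iff]
        have hct : U' ⊔ (W ⊔ (k ∙ v)) = ⊤ := hcompl.codisjoint.eq_top
        have : U' ⊔ (k ∙ v) ⊔ W = U' ⊔ (W ⊔ (k ∙ v)) := by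
          rw [sup_assoc, sup_comm (k ∙ v) W]
        rw [this, hct]
    exact ⟨U' ⊔ (k ∙ v), final W₁ hv₁ hc₁, final W₂ hv₂ hc₂⟩

lemma exists_subspace_finrank [FiniteDimensional k V] (W : Submodule k V) (m : ℕ)
    (hm : m ≤ finrank k W) : ∃ W' : Submodule k V, W' ≤ W ∧ finrank k W' = m := by
  classical
  let b := Module.finBasis k W
  let v : Fin m → V := fun i => (b (Fin.castLE hm i) : V)
  have hli : LinearIndependent k v := by
    have h1 : LinearIndependent k fun (i : Fin (finrank k W)) => ((b i : W) : V) :=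
      b.linearIndependent.map' W.subtype (Submodule.ker_subtype W)
    exact h1.comp (Fin.castLE hm) (Fin.castLE_injective hm)
  refine ⟨Submodule.span k (Set.range v), ?_, ?_⟩
  · rw [Submodule.span_le]
    rintro _ ⟨i, rfl⟩
    exact (b (Fin.castLE hm i)).2
  · rw [finrank_span_eq_card hli, Fintype.card_fin]

end Stmt6Aux

namespace Stmt6Aux
open Matrix Module Submodule

variable {k : Type*} [Field k] {d : ℕ}

lemma exists_ginv (A : Matrix (Fin d) (Fin d) k) :
    ∃ J : Matrix (Fin d) (Fin d) k, A * J * A = A := by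
  classical
  set f := Matrix.mulVecLin A with hf
  obtain ⟨Q, hQ⟩ := Submodule.exists_isCompl (LinearMap.range f)
  set π := (LinearMap.range f).linearProjOfIsCompl Q hQ with hπ
  obtain ⟨s, hs⟩ := LinearMap.exists_rightInverse_of_surjective f.rangeRestrict
    (LinearMap.range_rangeRestrict f)
  set gm : (Fin d → k) →ₗ[k] (Fin d → k) := s ∘ₗ π with hgm
  refine ⟨LinearMap.toMatrix' gm, ?_⟩
  apply Matrix.toLin'.injective
  rw [Matrix.toLin'_mul, Matrix.toLin'_mul, Matrix.toLin'_toMatrix']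
  rw [Matrix.toLin'_apply']
  apply LinearMap.ext
  intro v
  simp only [LinearMap.comp_apply]
  have h1 : π (f v) = ⟨f v, LinearMap.mem_range_self f v⟩ :=
    Submodule.linearProjOfIsCompl_apply_left hQ ⟨f v, LinearMap.mem_range_self f v⟩
  have h2 : ∀ r : LinearMap.range f, f (s r) = (r : Fin d → k) := by
    intro r
    have := congrArg (fun (φ : _ →ₗ[k] LinearMap.range f) => (φ r : Fin d → k)) hs
    simpa using this
  rw [hgm]
  simp only [LinearMap.comp_apply, h1]
  exact (h2 (π (f v))).trans (congrArg Subtype.val h1)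

end Stmt6Aux

namespace Stmt6Aux
open Matrix Module Submodule

variable {k : Type*} [Field k] {n d : ℕ}

lemma exists_data (hnd : n ≤ d) (x y : Matrix (Fin n) (Fin d) k) :
    ∃ G G' W L : Matrix (Fin d) (Fin d) k,
      G * G' = 1 ∧ G' * G = 1 ∧
      x * G * Emat (k := k) hnd = x * G ∧
      (y * G * Emat (k := k) hnd) * W = y * G - y * G * Emat (k := k) hnd ∧
      Emat (k := k) hnd * W = W ∧ W * Emat (k := k) hnd = 0 ∧
      W * L * W = -W ∧ L * Emat (k := k) hnd = L ∧ Emat (k := k) hnd * L = 0 := by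
  classical
  have hfinV : finrank k (Fin d → k) = d := by
    rw [Module.finrank_pi]
    exact Fintype.card_fin d
  -- small kernels
  have kerbig : ∀ z : Matrix (Fin n) (Fin d) k,
      d - n ≤ finrank k (LinearMap.ker z.mulVecLin) := by
    intro z
    have h1 := LinearMap.finrank_range_add_finrank_ker z.mulVecLin
    rw [hfinV] at h1
    have h2 : finrank k (LinearMap.range z.mulVecLin) ≤ n := by
      refine le_trans (Submodule.finrank_le _) ?_
      rw [Module.finrank_pi]
      exact le_of_eq (Fintype.card_fin n)
    omega
  obtain ⟨Kx, hKxle, hKxrank⟩ :=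
    exists_subspace_finrank (LinearMap.ker x.mulVecLin) (d - n) (kerbig x)
  obtain ⟨Ky, hKyle, hKyrank⟩ :=
    exists_subspace_finrank (LinearMap.ker y.mulVecLin) (d - n) (kerbig y)
  obtain ⟨U, hU1, hU2⟩ := common_compl n Kx Ky (by rw [hKxrank, hKyrank])
    (by rw [hKxrank]; omega)
  have hfrU : finrank k U = n := by
    have h1 := Submodule.finrank_sup_add_finrank_inf_eq U Kx
    rw [hU1.codisjoint.eq_top, hU1.disjoint.eq_bot, finrank_top, hfinV, finrank_bot,
      hKxrank] at h1
    omega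
  -- bases
  let bU : Basis (Fin n) k U := (Module.finBasis k U).reindex (finCongr hfrU)
  let bK : Basis (Fin (d - n)) k Kx := (Module.finBasis k Kx).reindex (finCongr hKxrank)
  let bSum : Basis (Fin n ⊕ Fin (d - n)) k (Fin d → k) :=
    (bU.prod bK).map (Submodule.prodEquivOfIsCompl U Kx hU1)
  let e : (Fin n ⊕ Fin (d - n)) ≃ Fin d := finSumFinEquiv.trans (finCongr (by omega))
  let Bd : Basis (Fin d) k (Fin d → k) := bSum.reindex e
  have he_inl : ∀ s : Fin n, ((e (Sum.inl s) : Fin d) : ℕ) = (s : ℕ) := by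
    intro s; simp [e, finSumFinEquiv]
  have he_inr : ∀ jj : Fin (d - n), ((e (Sum.inr jj) : Fin d) : ℕ) = n + (jj : ℕ) := by
    intro jj; simp [e, finSumFinEquiv]
  have hBd_inl : ∀ s : Fin n, Bd (e (Sum.inl s)) = (bU s : Fin d → k) := by
    intro s
    rw [show Bd (e (Sum.inl s)) = bSum (e.symm (e (Sum.inl s))) from Basis.reindex_apply .. ]
    rw [Equiv.symm_apply_apply]
    rw [show bSum (Sum.inl s)
      = (Submodule.prodEquivOfIsCompl U Kx hU1) ((bU.prod bK) (Sum.inl s)) from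
      Basis.map_apply ..]
    have hp : (bU.prod bK) (Sum.inl s) = (bU s, 0) :=
      Prod.ext (Basis.prod_apply_inl_fst _ _ _) (Basis.prod_apply_inl_snd _ _ _)
    rw [hp]
    have := congrArg (fun (φ : (U × Kx) →ₗ[k] (Fin d → k)) => φ (bU s, 0))
      (Submodule.coe_prodEquivOfIsCompl U Kx hU1)
    simpa using this
  have hBd_inr : ∀ jj : Fin (d - n), Bd (e (Sum.inr jj)) = (bK jj : Fin d → k) := by
    intro jj
    rw [show Bd (e (Sum.inr jj)) = bSum (e.symm (e (Sum.inr jj))) from Basis.reindex_apply .. ]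
    rw [Equiv.symm_apply_apply]
    rw [show bSum (Sum.inr jj)
      = (Submodule.prodEquivOfIsCompl U Kx hU1) ((bU.prod bK) (Sum.inr jj)) from
      Basis.map_apply ..]
    have hp : (bU.prod bK) (Sum.inr jj) = (0, bK jj) :=
      Prod.ext (Basis.prod_apply_inr_fst _ _ _) (Basis.prod_apply_inr_snd _ _ _)
    rw [hp]
    have := congrArg (fun (φ : (U × Kx) →ₗ[k] (Fin d → k)) => φ (0, bK jj))
      (Submodule.coe_prodEquivOfIsCompl U Kx hU1)
    simpa using this
  -- the matrices G and G'
  set G : Matrix (Fin d) (Fin d) k := (Pi.basisFun k (Fin d)).toMatrix ⇑Bd with hG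
  set G' : Matrix (Fin d) (Fin d) k := Bd.toMatrix ⇑(Pi.basisFun k (Fin d)) with hG'
  have hGG' : G * G' = 1 := Basis.toMatrix_mul_toMatrix_flip _ _
  have hG'G : G' * G = 1 := Basis.toMatrix_mul_toMatrix_flip _ _
  have hGapply : ∀ i j, G i j = Bd j i := by
    intro i j
    rw [hG, Basis.toMatrix_apply, Pi.basisFun_repr]
  -- columns of z*G
  have hcol : ∀ (z : Matrix (Fin n) (Fin d) k) (i : Fin n) (j : Fin d),
      (z * G) i j = z.mulVec (Bd j) i := by
    intro z i j
    rw [Matrix.mul_apply, Matrix.mulVec, dotProduct]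
    exact Finset.sum_congr rfl fun s _ => by rw [hGapply]
  -- fact (A) : x*G*E = x*G
  have hxGE : x * G * Emat (k := k) hnd = x * G := by
    ext i j
    rw [mul_E_apply]
    by_cases hj : (j : ℕ) < n
    · rw [if_pos hj]
    · rw [if_neg hj, hcol]
      rcases he : e.symm j with s | jj
      · exfalso
        have : j = e (Sum.inl s) := by rw [← he, Equiv.apply_symm_apply]
        rw [this, he_inl] at hj
        exact hj s.2
      · have hj2 : j = e (Sum.inr jj) := by rw [← he, Equiv.apply_symm_apply]
        have hmem : Bd j ∈ LinearMap.ker x.mulVecLin := by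
          rw [hj2, hBd_inr]
          exact hKxle (bK jj).2
        have := LinearMap.mem_ker.1 hmem
        rw [Matrix.mulVecLin_apply] at this
        rw [this]
        rfl
  -- coverage : every y-column value is reached by y*G*E
  have hreach : ∀ u : Fin d → k, u ∈ U → ∃ c : Fin d → k, (G * Emat (k := k) hnd).mulVec c = u := by
    intro u hu
    refine ⟨fun t => Sum.elim (fun s => bU.repr ⟨u, hu⟩ s) (fun _ => 0) (e.symm t), ?_⟩
    have hrepr := congrArg (fun (w : U) => (w : Fin d → k)) (bU.sum_repr ⟨u, hu⟩)
    funext i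
    rw [Matrix.mulVec, dotProduct]
    rw [← Equiv.sum_comp e (fun t => (G * Emat (k := k) hnd) i t *
      Sum.elim (fun s => bU.repr ⟨u, hu⟩ s) (fun _ => 0) (e.symm t))]
    rw [Fintype.sum_sum_type]
    have hz : ∀ jj : Fin (d - n), (G * Emat (k := k) hnd) i (e (Sum.inr jj)) *
        Sum.elim (fun s => bU.repr ⟨u, hu⟩ s) (fun _ => 0) (e.symm (e (Sum.inr jj))) = 0 := by
      intro jj
      rw [Equiv.symm_apply_apply]
      simp
    rw [Finset.sum_congr rfl (fun jj _ => hz jj), Finset.sum_const, smul_zero, add_zero]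
    have hterm : ∀ s : Fin n, (G * Emat (k := k) hnd) i (e (Sum.inl s)) *
        Sum.elim (fun s' => bU.repr ⟨u, hu⟩ s') (fun _ => 0) (e.symm (e (Sum.inl s)))
        = bU.repr ⟨u, hu⟩ s * (bU s : Fin d → k) i := by
      intro s
      rw [Equiv.symm_apply_apply, Sum.elim_inl, mul_E_apply]
      rw [if_pos (by rw [he_inl]; exact s.2)]
      rw [hGapply, hBd_inl]
      ring
    rw [Finset.sum_congr rfl (fun s _ => hterm s)]
    have : ((∑ s : Fin n, bU.repr ⟨u, hu⟩ s • bU s : U) : Fin d → k) i = u i := by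
      rw [bU.sum_repr ⟨u, hu⟩]
    rw [← this, Submodule.coe_sum]
    rw [Finset.sum_apply]
    exact Finset.sum_congr rfl fun s _ => by rw [Submodule.coe_smul, Pi.smul_apply, smul_eq_mul]
  have hcov : ∀ j : Fin d, ∃ c : Fin d → k,
      (y * G * Emat (k := k) hnd).mulVec c = y.mulVec (Bd j) := by
    intro j
    have htop : (Bd j : Fin d → k) ∈ U ⊔ Ky := by
      rw [hU2.codisjoint.eq_top]
      trivial
    obtain ⟨u, hu, w, hw, huw⟩ := Submodule.mem_sup.1 htop
    obtain ⟨c, hc⟩ := hreach u hu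
    refine ⟨c, ?_⟩
    have h1 : (y * G * Emat (k := k) hnd).mulVec c = y.mulVec ((G * Emat (k := k) hnd).mulVec c) := by
      rw [Matrix.mulVec_mulVec, Matrix.mul_assoc]
    rw [h1, hc, ← huw]
    have h2 : y.mulVec (u + w) = y.mulVec u + y.mulVec w := Matrix.mulVec_add y u w
    have h3 : y.mulVec w = 0 := by
      have := LinearMap.mem_ker.1 (hKyle hw)
      rwa [Matrix.mulVecLin_apply] at this
    rw [h2, h3, add_zero]
  -- the matrix C and W
  set Cm : Matrix (Fin d) (Fin d) k := Matrix.of fun i j => (hcov j).choose i with hCm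
  have hC : (y * G * Emat (k := k) hnd) * Cm = y * G := by
    ext i j
    have h1 : ((y * G * Emat (k := k) hnd) * Cm) i j
        = ((y * G * Emat (k := k) hnd).mulVec ((hcov j).choose)) i := by
      rw [Matrix.mul_apply, Matrix.mulVec, dotProduct]
      rfl
    rw [h1, (hcov j).choose_spec, hcol]
  set W : Matrix (Fin d) (Fin d) k := Emat (k := k) hnd * Cm * (1 - Emat (k := k) hnd) with hW
  have hsubE : (1 - Emat (k := k) hnd) * Emat (k := k) hnd = 0 := by
    rw [sub_mul, one_mul, EE, sub_self]
  have hEsub : Emat (k := k) hnd * (1 - Emat (k := k) hnd) = 0 := by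
    rw [mul_sub, mul_one, EE, sub_self]
  have hEW : Emat (k := k) hnd * W = W := by
    rw [hW, ← Matrix.mul_assoc, ← Matrix.mul_assoc, EE]
  have hWE : W * Emat (k := k) hnd = 0 := by
    rw [hW, Matrix.mul_assoc, hsubE, Matrix.mul_zero]
  have hYW : (y * G * Emat (k := k) hnd) * W = y * G - y * G * Emat (k := k) hnd := by
    rw [hW]
    have h1 : (y * G * Emat (k := k) hnd) * (Emat (k := k) hnd * Cm * (1 - Emat (k := k) hnd))
        = ((y * G * (Emat (k := k) hnd * Emat (k := k) hnd)) * Cm) * (1 - Emat (k := k) hnd) := by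
      simp only [Matrix.mul_assoc]
    rw [h1, EE, hC, Matrix.mul_sub, Matrix.mul_one]
  obtain ⟨J, hJ⟩ := exists_ginv W
  set L : Matrix (Fin d) (Fin d) k := -((1 - Emat (k := k) hnd) * J * Emat (k := k) hnd) with hL
  have hLE : L * Emat (k := k) hnd = L := by
    rw [hL, neg_mul, neg_inj, Matrix.mul_assoc, Matrix.mul_assoc, EE, ← Matrix.mul_assoc]
  have hEL : Emat (k := k) hnd * L = 0 := by
    rw [hL, Matrix.mul_neg, neg_eq_zero, ← Matrix.mul_assoc, ← Matrix.mul_assoc, hEsub,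
      Matrix.zero_mul, Matrix.zero_mul]
  have hWLW : W * L * W = -W := by
    have h2 : W * (1 - Emat (k := k) hnd) = W := by
      rw [Matrix.mul_sub, Matrix.mul_one, hWE, sub_zero]
    have h3 : Emat (k := k) hnd * W = W := hEW
    rw [hL]
    calc W * -((1 - Emat (k := k) hnd) * J * Emat (k := k) hnd) * W
        = -((W * (1 - Emat (k := k) hnd)) * J * (Emat (k := k) hnd * W)) := by
          simp only [Matrix.mul_neg, Matrix.neg_mul, Matrix.mul_assoc]
      _ = -(W * J * W) := by rw [h2, h3, Matrix.mul_assoc]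
      _ = -W := by rw [hJ]
  exact ⟨G, G', W, L, hGG', hG'G, hxGE, hYW, hEW, hWE, hWLW, hLE, hEL⟩

end Stmt6Aux


/-- Theorem 7 (case `Z = {0}`): if some `H`-invariant of `d` vectors separates the matrices
`x` and `y`, then some polarized invariant already separates them. -/
theorem stmt6 {k : Type*} [Field k] [IsAlgClosed k] {n d : ℕ} (hn : 0 < n) (hnd : n ≤ d)
    (H : Subgroup (GL (Fin n) k)) (x y : Matrix (Fin n) (Fin d) k)
    (F : MvPolynomial (Fin n × Fin d) k) (hF : F ∈ HinvAlg H)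
    (hxy : eval (fun p => x p.1 p.2) F ≠ eval (fun p => y p.1 p.2) F) :
    ∃ f ∈ polarized hnd H,
      eval (fun p => x p.1 p.2) f ≠ eval (fun p => y p.1 p.2) f := by
  classical
  by_contra hcon
  push_neg at hcon
  obtain ⟨G, G', W, L, hGG', hG'G, hxGE, hYW, hEW, hWE, hWLW, hLE, hEL⟩ :=
    Stmt6Aux.exists_data hnd x y
  set E : Matrix (Fin d) (Fin d) k := Stmt6Aux.Emat (k := k) hnd with hE
  have hEE : E * E = E := Stmt6Aux.EE hnd
  have hLL : L * L = 0 := by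
    have h1 : L * L = L * (E * L) := by rw [← Matrix.mul_assoc, hLE]
    rw [h1, hEL, Matrix.mul_zero]
  -- group elements
  have hexp1 : (1 + L) * (1 - L) = (1 : Matrix (Fin d) (Fin d) k) := by
    have : (1 + L) * (1 - L) = 1 - L * L := by noncomm_ring
    rw [this, hLL, sub_zero]
  have hexp2 : (1 - L) * (1 + L) = (1 : Matrix (Fin d) (Fin d) k) := by
    have : (1 - L) * (1 + L) = 1 - L * L := by noncomm_ring
    rw [this, hLL, sub_zero]
  set gl1 : GL (Fin d) k := ⟨G, G', hGG', hG'G⟩ with hgl1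
  set glu : GL (Fin d) k := ⟨1 + L, 1 - L, hexp1, hexp2⟩ with hglu
  set gl2 : GL (Fin d) k := gl1 * glu with hgl2
  have key := Stmt6Aux.gen_eval hnd H x y hF hcon
  have key1 : ∀ B : Matrix (Fin d) (Fin d) k,
      eval (fun p => (x * (G * E * B)) p.1 p.2) F
        = eval (fun p => (y * (G * E * B)) p.1 p.2) F := fun B => key gl1 B
  have key2 : ∀ B : Matrix (Fin d) (Fin d) k,
      eval (fun p => (x * ((G * ((1 : Matrix (Fin d) (Fin d) k) + L)) * E * B)) p.1 p.2) F
        = eval (fun p => (y * ((G * ((1 : Matrix (Fin d) (Fin d) k) + L)) * E * B)) p.1 p.2) F :=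
    fun B => key gl2 B
  set B₁ : Matrix (Fin d) (Fin d) k := (E + W) * G' with hB₁
  -- matrix identities
  have hxGL : x * G * L = 0 := by
    have h1 : (1 - E) * L = L := by rw [sub_mul, one_mul, hEL, sub_zero]
    have h2 : x * G * L = (x * G) * ((1 - E) * L) := by rw [h1]
    rw [h2, ← Matrix.mul_assoc, Matrix.mul_sub, Matrix.mul_one, hxGE, sub_self,
      Matrix.zero_mul]
  have hxG1L : x * G * (1 + L) = x * G := by
    rw [Matrix.mul_add, Matrix.mul_one, hxGL, add_zero]
  have hyG1LE : y * G * (1 + L) * E = y * G * E + y * G * L := by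
    rw [Matrix.mul_add, Matrix.mul_one, Matrix.add_mul, Matrix.mul_assoc (y * G) L E, hLE]
  have hyGL : y * G * L = y * G * E * W * L := by
    have h1 : (1 - E) * L = L := by rw [sub_mul, one_mul, hEL, sub_zero]
    have h2 : y * G * L = (y * G) * ((1 - E) * L) := by rw [h1]
    rw [h2, ← Matrix.mul_assoc, Matrix.mul_sub, Matrix.mul_one, ← hYW]
  have hyGLW : y * G * L * W = -(y * G * E * W) := by
    rw [hyGL, Matrix.mul_assoc (y * G * E) W L, Matrix.mul_assoc (y * G * E) (W * L) W,
      hWLW, Matrix.mul_neg]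
  have hM1 : y * (G * E * B₁) = y := by
    have hshape : y * (G * E * B₁) = y * G * E * (E + W) * G' := by
      rw [hB₁]; simp only [← Matrix.mul_assoc]
    have ha : y * G * E * (E + W) = y * G := by
      rw [Matrix.mul_add, hYW, Matrix.mul_assoc (y * G) E E, hEE]
      abel
    rw [hshape, ha, Matrix.mul_assoc, hGG', Matrix.mul_one]
  have hM2 : x * (G * E * B₁)
      = x * ((G * ((1 : Matrix (Fin d) (Fin d) k) + L)) * E * B₁) := by
    rw [hB₁]
    simp only [← Matrix.mul_assoc]
    rw [hxG1L]
  have hM3 : y * ((G * ((1 : Matrix (Fin d) (Fin d) k) + L)) * E * B₁)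
      = y * ((G * ((1 : Matrix (Fin d) (Fin d) k) + L)) * E * G') := by
    rw [hB₁]
    simp only [← Matrix.mul_assoc]
    have hT : y * G * (1 + L) * E * (E + W) = y * G * (1 + L) * E := by
      rw [Matrix.mul_add]
      have t1 : y * G * (1 + L) * E * E = y * G * (1 + L) * E := by
        rw [Matrix.mul_assoc (y * G * (1 + L)) E E, hEE]
      have t2 : y * G * (1 + L) * E * W = 0 := by
        rw [hyG1LE, Matrix.add_mul, hyGLW]
        simp
      rw [t1, t2, add_zero]
    rw [hT]
  have hM4 : x * ((G * ((1 : Matrix (Fin d) (Fin d) k) + L)) * E * G') = x := by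
    simp only [← Matrix.mul_assoc]
    rw [hxG1L, hxGE, Matrix.mul_assoc, hGG', Matrix.mul_one]
  have evc : ∀ (M M' : Matrix (Fin n) (Fin d) k), M = M' →
      eval (fun p => M p.1 p.2) F = eval (fun p => M' p.1 p.2) F := by
    rintro M M' rfl; rfl
  apply hxy
  calc eval (fun p => x p.1 p.2) F
      = eval (fun p => (x * ((G * ((1 : Matrix (Fin d) (Fin d) k) + L)) * E * G')) p.1 p.2) F :=
        (evc _ _ hM4).symm
    _ = eval (fun p => (y * ((G * ((1 : Matrix (Fin d) (Fin d) k) + L)) * E * G')) p.1 p.2) F :=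
        key2 G'
    _ = eval (fun p => (y * ((G * ((1 : Matrix (Fin d) (Fin d) k) + L)) * E * B₁)) p.1 p.2) F :=
        (evc _ _ hM3).symm
    _ = eval (fun p => (x * ((G * ((1 : Matrix (Fin d) (Fin d) k) + L)) * E * B₁)) p.1 p.2) F :=
        (key2 B₁).symm
    _ = eval (fun p => (x * (G * E * B₁)) p.1 p.2) F := (evc _ _ hM2).symm
    _ = eval (fun p => (y * (G * E * B₁)) p.1 p.2) F := key1 B₁
    _ = eval (fun p => y p.1 p.2) F := evc _ _ hM1
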